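/- arXiv:0805.3438 — 4 statements merged into one kernel-verified Lean document; each statement's English description precedes it below -/
import Mathlib

section
/- The graded derivation d_Q defined by d_Q h_{μν} = −(i/2)(d_μ u_ν + d_ν u_μ − η_{μν}d_ρ u^ρ), d_Q u_μ = 0, d_Q ũ_μ = i d^ν h_{μν}, extended to all jet variables by [d_Q, d_λ] = 0, satisfies d_Q² = 0. -/
open Complex in
/-- The massless gauge variation `d_Q`, defined on the generators by
`d_Q h_{μν} = −(i/2)(d_μ u_ν + d_ν u_μ − η_{μν} d_ρ u^ρ)`, `d_Q u_μ = 0`,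
`d_Q ũ_μ = i d^ν h_{μν}`, and extended by `[d_Q, d_λ] = 0`, squares to zero
(on-shell, i.e. on the jet variables of the massless fields). -/
theorem stmt10 {A : Type*} [AddCommGroup A] [Module ℂ A]
    (η : Fin 4 → Fin 4 → ℂ)
    (hη : ∀ μ ν, η μ ν = if μ = ν then (if μ = 0 then 1 else -1) else 0)
    (d : Fin 4 → A →ₗ[ℂ] A) (dQ : A →ₗ[ℂ] A)
    (hcomm : ∀ μ ν a, d μ (d ν a) = d ν (d μ a))
    (hQd : ∀ μ a, dQ (d μ a) = d μ (dQ a))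
    (h : Fin 4 → Fin 4 → A) (u ut : Fin 4 → A)
    (hsymh : ∀ μ ν, h μ ν = h ν μ)
    -- the fields are massless: they satisfy the wave equation □ = η^{λκ} d_λ d_κ = 0
    (hwaveh : ∀ μ ν, (∑ lam : Fin 4, η lam lam • d lam (d lam (h μ ν))) = 0)
    (hwaveu : ∀ μ, (∑ lam : Fin 4, η lam lam • d lam (d lam (u μ))) = 0)
    (hwaveut : ∀ μ, (∑ lam : Fin 4, η lam lam • d lam (d lam (ut μ))) = 0)
    (hQh : ∀ μ ν, dQ (h μ ν) =
      (-(I/2)) • (d μ (u ν) + d ν (u μ) - η μ ν • (∑ ρ : Fin 4, η ρ ρ • d ρ (u ρ))))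
    (hQu : ∀ μ, dQ (u μ) = 0)
    (hQut : ∀ μ, dQ (ut μ) = I • (∑ ν : Fin 4, η ν ν • d ν (h μ ν))) :
    (∀ μ ν, dQ (dQ (h μ ν)) = 0) ∧
    (∀ μ, dQ (dQ (u μ)) = 0) ∧
    (∀ μ, dQ (dQ (ut μ)) = 0) := by
  refine ⟨fun μ ν => by simp [hQh, hQd, hQu], fun μ => by simp [hQu], fun μ => ?_⟩
  set S : A := ∑ ρ : Fin 4, η ρ ρ • d ρ (u ρ) with hSdef
  have hdS : ∀ κ : Fin 4, d κ S = ∑ ν : Fin 4, η ν ν • d κ (d ν (u ν)) := by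
    intro κ; rw [hSdef, map_sum]; simp [map_smul]
  have hηsq : η μ μ * η μ μ = 1 := by
    rw [hη]; by_cases hμ : μ = 0 <;> simp [hμ]
  have hsum : ∑ ν : Fin 4, η ν ν • d ν (dQ (h μ ν)) = 0 := by
    have step : ∀ ν : Fin 4, η ν ν • d ν (dQ (h μ ν)) =
        (-(I/2)) • (η ν ν • d μ (d ν (u ν)) + η ν ν • d ν (d ν (u μ))
          - η ν ν • η μ ν • d ν S) := by
      intro ν
      rw [hQh, map_smul, smul_comm, map_sub, map_add, map_smul, hcomm ν μ, smul_sub,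
        smul_add]
    rw [Finset.sum_congr rfl fun ν _ => step ν, ← Finset.smul_sum]
    have e1 : ∑ ν : Fin 4, (η ν ν • d μ (d ν (u ν)) + η ν ν • d ν (d ν (u μ))
        - η ν ν • η μ ν • d ν S) = (∑ ν : Fin 4, η ν ν • d μ (d ν (u ν)))
        + (∑ ν : Fin 4, η ν ν • d ν (d ν (u μ)))
        - ∑ ν : Fin 4, η ν ν • η μ ν • d ν S := by
      rw [Finset.sum_sub_distrib, Finset.sum_add_distrib]
    have e2 : ∑ ν : Fin 4, η ν ν • η μ ν • d ν S = d μ S := by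
      rw [Finset.sum_eq_single μ]
      · rw [smul_smul, hηsq, one_smul]
      · intro ν _ hν
        rw [hη μ ν, if_neg (Ne.symm hν)]
        simp
      · simp
    rw [e1, e2, hwaveu μ, ← hdS μ]
    simp
  rw [hQut, map_smul, map_sum]
  simp only [map_smul, hQd]
  rw [hsum, smul_zero]
end

section
/- In the massive case, the graded derivation d_Q defined by d_Q h_{μν} = −(i/2)(d_μ u_ν + d_ν u_μ − η_{μν}d_ρ u^ρ), d_Q u_μ = 0, d_Q ũ_μ = i(d^ν h_{μν} + m v_μ), d_Q v_μ = −(im/2) u_μ, with [d_Q, d_λ] = 0, satisfies d_Q² = 0. -/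
private lemma finmk0 (h : 0 < 4) : (⟨0, h⟩ : Fin 4) = 0 := rfl
private lemma finmk1 (h : 1 < 4) : (⟨1, h⟩ : Fin 4) = 1 := rfl
private lemma finmk2 (h : 2 < 4) : (⟨2, h⟩ : Fin 4) = 2 := rfl
private lemma finmk3 (h : 3 < 4) : (⟨3, h⟩ : Fin 4) = 3 := rfl
open Complex in
/-- In the massive case, the gauge variation `d_Q` defined by
`d_Q h_{μν} = −(i/2)(d_μ u_ν + d_ν u_μ − η_{μν} d_ρ u^ρ)`, `d_Q u_μ = 0`,
`d_Q ũ_μ = i(d^ν h_{μν} + m v_μ)`, `d_Q v_μ = −(im/2) u_μ`, with `[d_Q, d_λ] = 0`,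
squares to zero (on-shell, i.e. on the jet variables of the mass-`m` fields). -/
theorem stmt11 {A : Type*} [AddCommGroup A] [Module ℂ A]
    (η : Fin 4 → Fin 4 → ℂ)
    (hη : ∀ μ ν, η μ ν = if μ = ν then (if μ = 0 then 1 else -1) else 0)
    (m : ℝ)
    (d : Fin 4 → A →ₗ[ℂ] A) (dQ : A →ₗ[ℂ] A)
    (hcomm : ∀ μ ν a, d μ (d ν a) = d ν (d μ a))
    (hQd : ∀ μ a, dQ (d μ a) = d μ (dQ a))
    (h : Fin 4 → Fin 4 → A) (v u ut : Fin 4 → A)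
    (hsymh : ∀ μ ν, h μ ν = h ν μ)
    -- the fields have mass m: Klein-Gordon equation (□ + m²) = 0
    (hKGh : ∀ μ ν, (∑ lam : Fin 4, η lam lam • d lam (d lam (h μ ν)))
      + ((m : ℂ)^2) • h μ ν = 0)
    (hKGv : ∀ μ, (∑ lam : Fin 4, η lam lam • d lam (d lam (v μ)))
      + ((m : ℂ)^2) • v μ = 0)
    (hKGu : ∀ μ, (∑ lam : Fin 4, η lam lam • d lam (d lam (u μ)))
      + ((m : ℂ)^2) • u μ = 0)
    (hKGut : ∀ μ, (∑ lam : Fin 4, η lam lam • d lam (d lam (ut μ)))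
      + ((m : ℂ)^2) • ut μ = 0)
    (hQh : ∀ μ ν, dQ (h μ ν) =
      (-(I/2)) • (d μ (u ν) + d ν (u μ) - η μ ν • (∑ ρ : Fin 4, η ρ ρ • d ρ (u ρ))))
    (hQu : ∀ μ, dQ (u μ) = 0)
    (hQut : ∀ μ, dQ (ut μ) =
      I • ((∑ ν : Fin 4, η ν ν • d ν (h μ ν)) + (m : ℂ) • v μ))
    (hQv : ∀ μ, dQ (v μ) = (-(I * (m : ℂ) / 2)) • u μ) :
    (∀ μ ν, dQ (dQ (h μ ν)) = 0) ∧
    (∀ μ, dQ (dQ (u μ)) = 0) ∧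
    (∀ μ, dQ (dQ (ut μ)) = 0) ∧
    (∀ μ, dQ (dQ (v μ)) = 0) := by

  refine ⟨fun μ ν => ?_, fun μ => by rw [hQu, map_zero], fun μ => ?_, fun μ => by
    rw [hQv, map_smul, hQu, smul_zero]⟩
  · rw [hQh]
    simp [hQd, hQu]
  · have hk := hKGu μ
    rw [hQut]
    simp only [map_smul, map_add, map_sum, hQd, hQv, hQh, map_sub, smul_add, smul_sub,
      Fin.sum_univ_four, hη] at hk ⊢
    fin_cases μ <;>
      simp only [show ((0:Fin 4) = 0) = True from by simp, Fin.reduceEq, if_true, if_false,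
        one_smul, neg_smul, neg_neg, smul_add, smul_sub, smul_neg, finmk0, finmk1, finmk2, finmk3, hcomm] at hk ⊢ <;>
      linear_combination (norm := match_scalars <;> (try ring_nf) <;> (try simp only [Complex.I_sq]) <;> (try norm_num) <;> (try ring1)) ((1:ℂ)/2) • hk
end

section
/- Let W^{[μν];ρ;{σ₁σ₂σ₃}} be a tensor antisymmetric in μ,ν and totally symmetric in σ₁,σ₂,σ₃, satisfying S_{ρ,σ₁,σ₂,σ₃} W^{[μν];ρ;{σ₁σ₂σ₃}} = 0 (total symmetrization over the last four indices vanishes). Define W̃^{[μν];[ρσ₁];{σ₂σ₃}} = (3/4)W^{[μν];ρ;{σ₁σ₂σ₃}} − (ρ ↔ σ₁). Then W^{[μν];ρ;{σ₁σ₂σ₃}} = S_{σ₁σ₂σ₃} W̃^{[μν];[ρσ₁];{σ₂σ₃}}, where S denotes symmetrization (averaged) over the indicated indices. -/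
lemma key {K : Type*} [Field K] {n : ℕ} (g : Fin (n+1) → (Fin n → Fin (n+1)) → K)
    (hg : ∀ a v (τ : Equiv.Perm (Fin n)), g a (v ∘ τ) = g a v) :
    ∑ σ : Equiv.Perm (Fin (n+1)), g (σ 0) (fun i => σ i.succ)
      = (n.factorial : K) * ∑ a : Fin (n+1), g a (fun i => Equiv.swap 0 a i.succ) := by
  rw [← Equiv.sum_comp (Equiv.Perm.decomposeFin (n := n)).symm
      (fun σ => g (σ 0) (fun i => σ i.succ))]
  rw [Fintype.sum_prod_type]
  have h1 : ∀ (a : Fin (n+1)) (τ : Equiv.Perm (Fin n)),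
      g ((Equiv.Perm.decomposeFin.symm (a, τ)) 0)
        (fun i => (Equiv.Perm.decomposeFin.symm (a, τ)) i.succ)
      = g a (fun i => Equiv.swap 0 a i.succ) := by
    intro a τ
    have hv : (fun i => (Equiv.Perm.decomposeFin.symm (a, τ)) i.succ)
        = (fun i => Equiv.swap 0 a i.succ) ∘ τ := by
      funext i
      simp [Equiv.Perm.decomposeFin_symm_apply_succ]
    rw [Equiv.Perm.decomposeFin_symm_apply_zero, hv, hg]
  simp only [h1, Finset.sum_const, Finset.card_univ, Fintype.card_perm,
    Fintype.card_fin, nsmul_eq_mul, ← Finset.mul_sum]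


/-- A tensor `W^{[μν];ρ;{σ₁σ₂σ₃}}`, antisymmetric in `μ,ν` and totally symmetric in
`σ₁,σ₂,σ₃`, whose total symmetrization over the last four indices `ρ,σ₁,σ₂,σ₃` vanishes,
is recovered from `W̃^{[μν];[ρσ₁];{σ₂σ₃}} = (3/4)W^{[μν];ρ;{σ₁σ₂σ₃}} − (ρ ↔ σ₁)` by
`W^{[μν];ρ;{σ₁σ₂σ₃}} = S_{σ₁σ₂σ₃} W̃^{[μν];[ρσ₁];{σ₂σ₃}}`, with `S` the symmetrization
projector (average over permutations). -/
theorem stmt14 {K : Type*} [Field K] [CharZero K]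
    (W : Fin 4 → Fin 4 → Fin 4 → (Fin 3 → Fin 4) → K)
    (hanti : ∀ μ ν ρ s, W μ ν ρ s = - W ν μ ρ s)
    (hsym : ∀ μ ν ρ (s : Fin 3 → Fin 4) (σ : Equiv.Perm (Fin 3)),
      W μ ν ρ (s ∘ σ) = W μ ν ρ s)
    (htot : ∀ μ ν (t : Fin 4 → Fin 4),
      ∑ σ : Equiv.Perm (Fin 4), W μ ν ((t ∘ σ) 0) (fun i => (t ∘ σ) i.succ) = 0) :
    ∀ μ ν ρ (s : Fin 3 → Fin 4),
      W μ ν ρ s = (6 : K)⁻¹ * ∑ σ : Equiv.Perm (Fin 3),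
        ((3 / 4 : K) * W μ ν ρ ![s (σ 0), s (σ 1), s (σ 2)]
          - (3 / 4 : K) * W μ ν (s (σ 0)) ![ρ, s (σ 1), s (σ 2)]) := by
  intro μ ν ρ s
  set A := W μ ν ρ s with hA
  set B1 := W μ ν (s 0) ![ρ, s 1, s 2] with hB1
  set B2 := W μ ν (s 1) ![ρ, s 0, s 2] with hB2
  set B3 := W μ ν (s 2) ![ρ, s 0, s 1] with hB3
  have hswap : ∀ (x : Fin 4) (b c : Fin 4), W μ ν x ![ρ, c, b] = W μ ν x ![ρ, b, c] := by
    intro x b c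
    have h := hsym μ ν x ![ρ, b, c] (Equiv.swap 1 2)
    have hv : (![ρ, b, c] ∘ (Equiv.swap 1 2 : Equiv.Perm (Fin 3))) = ![ρ, c, b] := by
      funext i; fin_cases i <;> rfl
    rw [hv] at h; exact h
  -- Step 1: expand htot with t = ![ρ, s 0, s 1, s 2]
  have H4 : (Nat.factorial 3 : K) * (A + (B1 + (B2 + B3))) = 0 := by
    set t : Fin 4 → Fin 4 := ![ρ, s 0, s 1, s 2] with htdef
    have hkey := key (K := K) (n := 3) (fun a v => W μ ν (t a) (fun i => t (v i)))
      (fun a v τ => hsym μ ν (t a) (fun i => t (v i)) τ)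
    have hsum : ∑ a : Fin 4, W μ ν (t a) (fun i => t (Equiv.swap 0 a i.succ))
        = A + (B1 + (B2 + B3)) := by
      rw [Fin.sum_univ_four]
      have e0 : (fun i => t (Equiv.swap 0 (0:Fin 4) i.succ)) = s := by
        funext i; fin_cases i <;> rfl
      have e1 : (fun i => t (Equiv.swap 0 (1:Fin 4) i.succ)) = ![ρ, s 1, s 2] := by
        funext i; fin_cases i <;> rfl
      have e2 : (fun i => t (Equiv.swap 0 (2:Fin 4) i.succ)) = ![s 0, ρ, s 2] := by
        funext i; fin_cases i <;> rfl
      have e3 : (fun i => t (Equiv.swap 0 (3:Fin 4) i.succ)) = ![s 0, s 1, ρ] := by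
        funext i; fin_cases i <;> rfl
      rw [e0, e1, e2, e3]
      have f2 : W μ ν (t 2) ![s 0, ρ, s 2] = B2 := by
        have h := hsym μ ν (t 2) ![ρ, s 0, s 2] (Equiv.swap 0 1)
        have hv : (![ρ, s 0, s 2] ∘ (Equiv.swap 0 1 : Equiv.Perm (Fin 3))) = ![s 0, ρ, s 2] := by
          funext i; fin_cases i <;> rfl
        rw [hv] at h; rw [h]; rfl
      have f3 : W μ ν (t 3) ![s 0, s 1, ρ] = B3 := by
        have h := hsym μ ν (t 3) ![ρ, s 0, s 1]
          (Equiv.swap 1 2 * Equiv.swap 0 2 : Equiv.Perm (Fin 3))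
        have hv : (![ρ, s 0, s 1] ∘ ((Equiv.swap 1 2 * Equiv.swap 0 2 : Equiv.Perm (Fin 3)) :
            Equiv.Perm (Fin 3))) = ![s 0, s 1, ρ] := by
          funext i; fin_cases i <;> rfl
        rw [hv] at h; rw [h]; rfl
      rw [f2, f3]
      show A + B1 + B2 + B3 = A + (B1 + (B2 + B3))
      ring
    rw [← hsum, ← hkey]
    exact htot μ ν t
  -- Step 2: compute the RHS sum
  rw [Finset.sum_sub_distrib]
  have hS1 : ∑ σ : Equiv.Perm (Fin 3), (3/4 : K) * W μ ν ρ ![s (σ 0), s (σ 1), s (σ 2)]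
      = 6 * ((3/4 : K) * A) := by
    have hterm : ∀ σ : Equiv.Perm (Fin 3),
        (3/4 : K) * W μ ν ρ ![s (σ 0), s (σ 1), s (σ 2)] = (3/4 : K) * A := by
      intro σ
      have h := hsym μ ν ρ s σ
      have hv : (s ∘ σ) = ![s (σ 0), s (σ 1), s (σ 2)] := by
        funext i; fin_cases i <;> rfl
      rw [hv] at h; rw [h]
    rw [Finset.sum_congr rfl (fun σ _ => hterm σ), Finset.sum_const, Finset.card_univ,
      Fintype.card_perm, Fintype.card_fin]
    norm_num [Nat.factorial]
  have hcase : ∀ τ : Equiv.Perm (Fin 2), (τ 0 = 0 ∧ τ 1 = 1) ∨ (τ 0 = 1 ∧ τ 1 = 0) := by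
    decide
  have hS2 : ∑ σ : Equiv.Perm (Fin 3), (3/4 : K) * W μ ν (s (σ 0)) ![ρ, s (σ 1), s (σ 2)]
      = (3/4 : K) * (2 * (B1 + (B2 + B3))) := by
    rw [← Finset.mul_sum]
    congr 1
    have hg : ∀ (a : Fin 3) (v : Fin 2 → Fin 3) (τ : Equiv.Perm (Fin 2)),
        W μ ν (s a) ![ρ, s ((v ∘ τ) 0), s ((v ∘ τ) 1)]
          = W μ ν (s a) ![ρ, s (v 0), s (v 1)] := by
      intro a v τ
      rcases hcase τ with ⟨h0, h1⟩ | ⟨h0, h1⟩ <;> simp only [Function.comp_apply, h0, h1]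
      exact hswap (s a) (s (v 0)) (s (v 1))
    have hkey2 := key (K := K) (n := 2)
      (fun a v => W μ ν (s a) ![ρ, s (v 0), s (v 1)]) hg
    have h2 : ∑ σ : Equiv.Perm (Fin 3), W μ ν (s (σ 0)) ![ρ, s (σ 1), s (σ 2)]
        = (Nat.factorial 2 : K) * ∑ a : Fin 3,
          (fun (a : Fin 3) (v : Fin 2 → Fin 3) => W μ ν (s a) ![ρ, s (v 0), s (v 1)]) a
            (fun i => Equiv.swap 0 a i.succ) := hkey2
    rw [h2, Fin.sum_univ_three,
      show (Nat.factorial 2 : K) = 2 by norm_num [Nat.factorial]]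
    show (2:K) * (B1 + B2 + W μ ν (s 2) ![ρ, s 1, s 0]) = 2 * (B1 + (B2 + B3))
    rw [hswap (s 2) (s 0) (s 1)]
    show (2:K) * (B1 + B2 + B3) = 2 * (B1 + (B2 + B3))
    ring
  rw [hS1, hS2]
  have hAB : A + (B1 + (B2 + B3)) = 0 := by
    have h6 : (Nat.factorial 3 : K) = 6 := by norm_num [Nat.factorial]
    rw [h6] at H4
    linear_combination (6:K)⁻¹ * H4
  linear_combination (4:K)⁻¹ * hAB
end

section
/- Let W^{[μν];[ρσ];λ} be a tensor (indices over a 4-element set, characteristic 0) antisymmetric in (μ,ν) and in (ρ,σ), satisfying both W^{[μν];[ρσ];λ} = −W^{[ρσ];[μν];λ} (antisymmetry under pair exchange) and W^{[μν];[ρσ];λ} = −W^{[μν];[ρλ];σ} (antisymmetry in σ,λ). Then W is totally antisymmetric in all five indices, hence identically zero in 4 dimensions. -/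
/-- A tensor `W^{[μν];[ρσ];λ}` antisymmetric in `(μ,ν)`, in `(ρ,σ)`, antisymmetric under
the pair exchange `(μν) ↔ (ρσ)`, and antisymmetric in `(σ,λ)`, is totally antisymmetric in
all five indices, hence identically zero in 4 dimensions. -/
theorem stmt15 {K : Type*} [Field K] [CharZero K]
    (W : Fin 4 → Fin 4 → Fin 4 → Fin 4 → Fin 4 → K)
    (h1 : ∀ μ ν ρ σ lam, W μ ν ρ σ lam = - W ν μ ρ σ lam)
    (h2 : ∀ μ ν ρ σ lam, W μ ν ρ σ lam = - W μ ν σ ρ lam)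
    (h3 : ∀ μ ν ρ σ lam, W μ ν ρ σ lam = - W ρ σ μ ν lam)
    (h4 : ∀ μ ν ρ σ lam, W μ ν ρ σ lam = - W μ ν ρ lam σ) :
    (∀ (t : Fin 5 → Fin 4) (i j : Fin 5), i ≠ j →
      W (t (Equiv.swap i j 0)) (t (Equiv.swap i j 1)) (t (Equiv.swap i j 2))
          (t (Equiv.swap i j 3)) (t (Equiv.swap i j 4))
        = - W (t 0) (t 1) (t 2) (t 3) (t 4)) ∧
    (∀ μ ν ρ σ lam, W μ ν ρ σ lam = 0) := by
  -- swap positions 1 and 4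
  have s14 : ∀ μ ν ρ σ l, W μ ν ρ σ l = - W μ l ρ σ ν := by
    intro μ ν ρ σ l
    rw [h3 μ ν ρ σ l, h4 ρ σ μ ν l, h3 ρ σ μ l ν]; ring
  have s01 := h1
  have s23 := h2
  have s34 := h4
  have s04 : ∀ μ ν ρ σ l, W μ ν ρ σ l = - W l ν ρ σ μ := by
    intro μ ν ρ σ l
    rw [h1 μ ν ρ σ l, s14 ν μ ρ σ l, h1 ν l ρ σ μ]; ring
  have s13 : ∀ μ ν ρ σ l, W μ ν ρ σ l = - W μ σ ρ ν l := by
    intro μ ν ρ σ l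
    rw [s14 μ ν ρ σ l, h4 μ l ρ σ ν, s14 μ l ρ ν σ]; ring
  have s24 : ∀ μ ν ρ σ l, W μ ν ρ σ l = - W μ ν l σ ρ := by
    intro μ ν ρ σ l
    rw [h2 μ ν ρ σ l, h4 μ ν σ ρ l, h2 μ ν σ l ρ]; ring
  have s12 : ∀ μ ν ρ σ l, W μ ν ρ σ l = - W μ ρ ν σ l := by
    intro μ ν ρ σ l
    rw [s14 μ ν ρ σ l, s24 μ l ρ σ ν, s14 μ l ν σ ρ]; ring
  have s03 : ∀ μ ν ρ σ l, W μ ν ρ σ l = - W σ ν ρ μ l := by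
    intro μ ν ρ σ l
    rw [h1 μ ν ρ σ l, s13 ν μ ρ σ l, h1 ν σ ρ μ l]; ring
  have s02 : ∀ μ ν ρ σ l, W μ ν ρ σ l = - W ρ ν μ σ l := by
    intro μ ν ρ σ l
    rw [h1 μ ν ρ σ l, s12 ν μ ρ σ l, h1 ν ρ μ σ l]; ring
  have part1 : ∀ (t : Fin 5 → Fin 4) (i j : Fin 5), i ≠ j →
      W (t (Equiv.swap i j 0)) (t (Equiv.swap i j 1)) (t (Equiv.swap i j 2))
          (t (Equiv.swap i j 3)) (t (Equiv.swap i j 4))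
        = - W (t 0) (t 1) (t 2) (t 3) (t 4) := by
    intro t i j hij
    fin_cases i <;> fin_cases j <;>
      first
        | exact absurd rfl hij
        | (norm_num [Equiv.swap_apply_def, Fin.ext_iff]
           first
        | exact s01 _ _ _ _ _ | exact s02 _ _ _ _ _ | exact s03 _ _ _ _ _
        | exact s04 _ _ _ _ _ | exact s12 _ _ _ _ _ | exact s13 _ _ _ _ _
        | exact s14 _ _ _ _ _ | exact s23 _ _ _ _ _ | exact s24 _ _ _ _ _
        | exact s34 _ _ _ _ _
        | (rw [s01 _ _ _ _ _]; ring) | (rw [s02 _ _ _ _ _]; ring)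
        | (rw [s03 _ _ _ _ _]; ring) | (rw [s04 _ _ _ _ _]; ring)
        | (rw [s12 _ _ _ _ _]; ring) | (rw [s13 _ _ _ _ _]; ring)
        | (rw [s14 _ _ _ _ _]; ring) | (rw [s23 _ _ _ _ _]; ring)
        | (rw [s24 _ _ _ _ _]; ring) | (rw [s34 _ _ _ _ _]; ring))
  refine ⟨part1, ?_⟩
  intro μ ν ρ σ lam
  set t : Fin 5 → Fin 4 := ![μ, ν, ρ, σ, lam] with ht
  obtain ⟨i, j, hne, heq⟩ : ∃ i j : Fin 5, i ≠ j ∧ t i = t j := by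
    have h := Fintype.exists_ne_map_eq_of_card_lt t (by norm_num)
    obtain ⟨i, j, hne, heq⟩ := h
    exact ⟨i, j, hne, heq⟩
  have key := part1 t i j hne
  have hfix : ∀ k : Fin 5, t (Equiv.swap i j k) = t k := by
    intro k
    rcases eq_or_ne k i with rfl | hki
    · rw [Equiv.swap_apply_left]; exact heq.symm
    · rcases eq_or_ne k j with rfl | hkj
      · rw [Equiv.swap_apply_right]; exact heq
      · rw [Equiv.swap_apply_of_ne_of_ne hki hkj]
  rw [hfix 0, hfix 1, hfix 2, hfix 3, hfix 4] at key
  have : W (t 0) (t 1) (t 2) (t 3) (t 4) = 0 := by linear_combination key / 2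
  simpa [ht] using this
end
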